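/- Let ϑ_N: (G,P) → (ℤ^N, ℤ₊^N) and ϑ_M: (H,S) → (ℤ^M, ℤ₊^M) be controlled maps with the minimality property, and let α: H → Aut(G) restrict to automorphisms of P and satisfy ϑ_N ∘ α_h = ϑ_N for all h ∈ H. Then the induced map ϑ: (G ⋊_α H, P ⋊_α S) → (ℤ^{N+M}, ℤ₊^{N+M}), ϑ(gh) = (ϑ_N(g), ϑ_M(h)), is a controlled map with the minimality property. -/
import Mathlib


/-- A quasi-lattice ordered group structure on a group `G`: a positive cone `P`
(submonoid with `P ∩ P⁻¹ = {1}`) such that any two elements of `P` with a common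
upper bound (for the left-invariant order `g ≤ h ↔ g⁻¹ * h ∈ P`) have a least
common upper bound in `P`. -/
structure QuasiLattice (G : Type*) [Group G] where
  P : Set G
  one_mem : (1 : G) ∈ P
  mul_mem : ∀ {a b : G}, a ∈ P → b ∈ P → a * b ∈ P
  antisymm' : ∀ g ∈ P, g⁻¹ ∈ P → g = 1
  lub_exists : ∀ p ∈ P, ∀ q ∈ P,
    (∃ r ∈ P, p⁻¹ * r ∈ P ∧ q⁻¹ * r ∈ P) →
    ∃ r ∈ P, p⁻¹ * r ∈ P ∧ q⁻¹ * r ∈ P ∧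
      ∀ s ∈ P, p⁻¹ * s ∈ P → q⁻¹ * s ∈ P → r⁻¹ * s ∈ P

namespace QuasiLattice

variable {G G' : Type*} [Group G] [Group G']

/-- The left-invariant partial order induced by the positive cone. -/
def le (Q : QuasiLattice G) (g h : G) : Prop := g⁻¹ * h ∈ Q.P

/-- `p` and `q` have a common upper bound in `P` (i.e. `p ∨ q < ∞`). -/
def HasCUB (Q : QuasiLattice G) (p q : G) : Prop := ∃ r ∈ Q.P, Q.le p r ∧ Q.le q r

/-- `r` is the least common upper bound of `p` and `q` in `P`. -/
def IsLub (Q : QuasiLattice G) (p q r : G) : Prop :=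
  r ∈ Q.P ∧ Q.le p r ∧ Q.le q r ∧ ∀ s ∈ Q.P, Q.le p s → Q.le q s → Q.le r s

end QuasiLattice

/-- A controlled map between quasi-lattice ordered groups: an order-preserving group
homomorphism, finite-to-one on `P`, respecting least upper bounds. -/
structure ControlledMap {G G' : Type*} [Group G] [Group G']
    (Q : QuasiLattice G) (Q' : QuasiLattice G') where
  toFun : G →* G'
  mapsP : ∀ p ∈ Q.P, toFun p ∈ Q'.P
  finite_fibers : ∀ g' : G', {p | p ∈ Q.P ∧ toFun p = g'}.Finite
  map_lub : ∀ p ∈ Q.P, ∀ q ∈ Q.P, ∀ r, Q.IsLub p q r →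
    Q'.IsLub (toFun p) (toFun q) (toFun r)

namespace ControlledMap

variable {G G' : Type*} [Group G] [Group G'] {Q : QuasiLattice G} {Q' : QuasiLattice G'}

/-- `p` is a minimal element of `ϑ⁻¹([m,∞]) ∩ P`. -/
def Minimal (θ : ControlledMap Q Q') (m : G') (p : G) : Prop :=
  p ∈ Q.P ∧ Q'.le m (θ.toFun p) ∧
    ∀ r ∈ Q.P, Q'.le m (θ.toFun r) → Q.le r p → r = p

/-- The minimality property of a controlled map: distinct minimal elements of
`ϑ⁻¹([m,∞]) ∩ P` have no common upper bound in `P`. -/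
def MinimalityProperty (θ : ControlledMap Q Q') : Prop :=
  ∀ m ∈ Q'.P, ∀ p q : G, θ.Minimal m p → θ.Minimal m q → p ≠ q → ¬ Q.HasCUB p q

end ControlledMap

/-- The quasi-lattice ordered group `(ℤ^κ, ℤ₊^κ)` (written multiplicatively). -/
def ZQL (κ : Type*) : QuasiLattice (Multiplicative (κ → ℤ)) where
  P := {x | ∀ i, 0 ≤ Multiplicative.toAdd x i}
  one_mem := fun i => le_refl 0
  mul_mem := fun {a b} ha hb i => add_nonneg (ha i) (hb i)
  antisymm' := fun g hg hg' => by
    have h : ∀ i, Multiplicative.toAdd g i = 0 := fun i => by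
      have h1 := hg i
      have h2 := hg' i
      simp only [toAdd_inv, Pi.neg_apply] at h2
      omega
    have : Multiplicative.toAdd g = 0 := funext h
    simpa using this
  lub_exists := fun p hp q hq _ => by
    refine ⟨Multiplicative.ofAdd
      (fun i => max (Multiplicative.toAdd p i) (Multiplicative.toAdd q i)), ?_, ?_, ?_, ?_⟩
    · intro i
      have := hp i
      simp only [toAdd_ofAdd]
      omega
    · intro i
      simp only [toAdd_mul, toAdd_inv, Pi.add_apply,
        Pi.neg_apply, toAdd_ofAdd]
      omega
    · intro i
      simp only [toAdd_mul, toAdd_inv, Pi.add_apply,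
        Pi.neg_apply, toAdd_ofAdd]
      omega
    · intro s _ hps hqs i
      have h1 := hps i
      have h2 := hqs i
      simp only [toAdd_mul, toAdd_inv, Pi.add_apply,
        Pi.neg_apply, toAdd_ofAdd] at h1 h2 ⊢
      omega


section Aux

open Multiplicative

lemma ZQL_le_iff {κ : Type*} (x y : Multiplicative (κ → ℤ)) :
    (ZQL κ).le x y ↔ ∀ i, toAdd x i ≤ toAdd y i := by
  show (∀ i, (0:ℤ) ≤ toAdd (x⁻¹ * y) i) ↔ _
  simp only [toAdd_mul, toAdd_inv, Pi.add_apply, Pi.neg_apply]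
  exact forall_congr' fun i => by omega

lemma ZQL_isLub_iff {κ : Type*} {p q r : Multiplicative (κ → ℤ)} (hp : p ∈ (ZQL κ).P) :
    (ZQL κ).IsLub p q r ↔ ∀ i, toAdd r i = max (toAdd p i) (toAdd q i) := by
  constructor
  · rintro ⟨hr, hpr, hqr, hmin⟩
    set s : Multiplicative (κ → ℤ) :=
      ofAdd (fun i => max (toAdd p i) (toAdd q i)) with hs_def
    have hsadd : ∀ i, toAdd s i = max (toAdd p i) (toAdd q i) := fun i => rfl
    have hsP : s ∈ (ZQL κ).P := fun i => le_trans (hp i) (le_max_left _ _)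
    have hps : (ZQL κ).le p s := (ZQL_le_iff p s).2 fun i => by
      rw [hsadd]; exact le_max_left _ _
    have hqs : (ZQL κ).le q s := (ZQL_le_iff q s).2 fun i => by
      rw [hsadd]; exact le_max_right _ _
    have hrs := hmin s hsP hps hqs
    intro i
    refine le_antisymm (by simpa [hsadd] using (ZQL_le_iff r s).1 hrs i) ?_
    exact max_le ((ZQL_le_iff p r).1 hpr i) ((ZQL_le_iff q r).1 hqr i)
  · intro h
    refine ⟨fun i => le_trans (hp i) (by rw [h]; exact le_max_left _ _), ?_, ?_, ?_⟩
    · exact (ZQL_le_iff p r).2 fun i => by rw [h]; exact le_max_left _ _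
    · exact (ZQL_le_iff q r).2 fun i => by rw [h]; exact le_max_right _ _
    · intro s _ hps hqs
      exact (ZQL_le_iff r s).2 fun i => by
        rw [h]; exact max_le ((ZQL_le_iff p s).1 hps i) ((ZQL_le_iff q s).1 hqs i)

lemma fin_append_add {n m : ℕ} (a c : Fin n → ℤ) (b d : Fin m → ℤ) :
    Fin.append (a + c) (b + d) = Fin.append a b + Fin.append c d := by
  funext i
  refine Fin.addCases (fun j => ?_) (fun j => ?_) i <;>
    simp [Fin.append_left, Fin.append_right]

lemma sd_le_iff {G H : Type*} [Group G] [Group H] {Q : QuasiLattice G} {QS : QuasiLattice H}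
    {α : H →* MulAut G}
    (hα : ∀ s ∈ QS.P, ∀ g : G, g ∈ Q.P ↔ α s g ∈ Q.P)
    (QSD : QuasiLattice (G ⋊[α] H))
    (hQSD : QSD.P = {x : G ⋊[α] H | x.left ∈ Q.P ∧ x.right ∈ QS.P})
    {x y : G ⋊[α] H} (hx : x.right ∈ QS.P) :
    QSD.le x y ↔ Q.le x.left y.left ∧ QS.le x.right y.right := by
  have key : ∀ z : G, α x.right (α x.right⁻¹ z) = z := fun z => by
    rw [← MulAut.mul_apply, ← map_mul, mul_inv_cancel, map_one, MulAut.one_apply]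
  have hmem : x⁻¹ * y ∈ QSD.P ↔ (x⁻¹*y).left ∈ Q.P ∧ (x⁻¹*y).right ∈ QS.P := by
    rw [hQSD]; rfl
  have hleft : (x⁻¹ * y).left = α x.right⁻¹ (x.left⁻¹ * y.left) := by
    rw [SemidirectProduct.mul_left, SemidirectProduct.inv_left,
      SemidirectProduct.inv_right, map_mul]
  have hright : (x⁻¹ * y).right = x.right⁻¹ * y.right := rfl
  show x⁻¹ * y ∈ QSD.P ↔ _
  rw [hmem, hleft, hright]
  have hiff : α x.right⁻¹ (x.left⁻¹ * y.left) ∈ Q.P ↔ x.left⁻¹ * y.left ∈ Q.P := by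
    rw [hα x.right hx (α x.right⁻¹ (x.left⁻¹ * y.left)), key]
  rw [hiff]
  exact Iff.rfl

end Aux

/-- If `ϑ_N : (G,P) → (ℤ^N, ℤ₊^N)` and `ϑ_M : (H,S) → (ℤ^M, ℤ₊^M)` are
controlled maps with the minimality property, and `α : H → Aut(G)` restricts to
automorphisms of `P` and satisfies `ϑ_N ∘ α_h = ϑ_N`, then the induced map
`ϑ(gh) = (ϑ_N(g), ϑ_M(h))` on `(G ⋊_α H, P ⋊_α S)` is a controlled map into
`(ℤ^{N+M}, ℤ₊^{N+M})` with the minimality property. -/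
theorem semidirectProduct_controlledMap_minimality {G H : Type*} [Group G] [Group H]
    {N M : ℕ} {Q : QuasiLattice G} {QS : QuasiLattice H}
    (θN : ControlledMap Q (ZQL (Fin N))) (θM : ControlledMap QS (ZQL (Fin M)))
    (hminN : θN.MinimalityProperty) (hminM : θM.MinimalityProperty)
    (α : H →* MulAut G)
    (hα : ∀ s ∈ QS.P, ∀ g : G, g ∈ Q.P ↔ α s g ∈ Q.P)
    (hinv : ∀ (h : H) (g : G), θN.toFun (α h g) = θN.toFun g)
    (QSD : QuasiLattice (G ⋊[α] H))
    (hQSD : QSD.P = {x : G ⋊[α] H | x.left ∈ Q.P ∧ x.right ∈ QS.P}) :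
    ∃ θ : ControlledMap QSD (ZQL (Fin (N + M))),
      (∀ x : G ⋊[α] H, Multiplicative.toAdd (θ.toFun x) =
        Fin.append (Multiplicative.toAdd (θN.toFun x.left))
          (Multiplicative.toAdd (θM.toFun x.right))) ∧
      θ.MinimalityProperty := by
  classical
  have hmem : ∀ z : G ⋊[α] H, z ∈ QSD.P ↔ z.left ∈ Q.P ∧ z.right ∈ QS.P := fun z => by
    rw [hQSD]; exact Iff.rfl
  have hreflQ : ∀ g : G, Q.le g g := fun g => by
    show g⁻¹ * g ∈ Q.P; rw [inv_mul_cancel]; exact Q.one_mem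
  have hreflQS : ∀ g : H, QS.le g g := fun g => by
    show g⁻¹ * g ∈ QS.P; rw [inv_mul_cancel]; exact QS.one_mem
  -- the homomorphism
  set f : G ⋊[α] H →* Multiplicative (Fin (N + M) → ℤ) :=
    { toFun := fun x => Multiplicative.ofAdd
        (Fin.append (Multiplicative.toAdd (θN.toFun x.left))
          (Multiplicative.toAdd (θM.toFun x.right)))
      map_one' := by
        have : Fin.append (Multiplicative.toAdd (θN.toFun (1 : G ⋊[α] H).left))
            (Multiplicative.toAdd (θM.toFun (1 : G ⋊[α] H).right)) = 0 := by
          funext i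
          refine Fin.addCases (fun j => ?_) (fun j => ?_) i <;>
            simp [SemidirectProduct.one_left, SemidirectProduct.one_right,
              Fin.append_left, Fin.append_right]
        show Multiplicative.ofAdd _ = 1
        rw [this, ofAdd_zero]
      map_mul' := fun x y => by
        have h1 : θN.toFun ((x * y).left) = θN.toFun x.left * θN.toFun y.left := by
          rw [SemidirectProduct.mul_left, map_mul, hinv]
        have h2 : θM.toFun ((x * y).right) = θM.toFun x.right * θM.toFun y.right := by
          rw [SemidirectProduct.mul_right, map_mul]
        simp only [h1, h2, toAdd_mul, fin_append_add, ofAdd_add] } with hf_def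
  have hfx : ∀ x : G ⋊[α] H, Multiplicative.toAdd (f x) =
      Fin.append (Multiplicative.toAdd (θN.toFun x.left))
        (Multiplicative.toAdd (θM.toFun x.right)) := fun _ => rfl
  -- maps P into positive cone
  have hmapsP : ∀ p ∈ QSD.P, f p ∈ (ZQL (Fin (N + M))).P := by
    intro p hp
    obtain ⟨hp1, hp2⟩ := (hmem p).1 hp
    intro i
    rw [hfx]
    refine Fin.addCases (fun j => ?_) (fun j => ?_) i
    · rw [Fin.append_left]; exact θN.mapsP _ hp1 j
    · rw [Fin.append_right]; exact θM.mapsP _ hp2 j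
  -- finite fibers
  have hfin : ∀ y : Multiplicative (Fin (N + M) → ℤ),
      {p : G ⋊[α] H | p ∈ QSD.P ∧ f p = y}.Finite := by
    intro y
    have hA := θN.finite_fibers (Multiplicative.ofAdd
      (fun j => Multiplicative.toAdd y (Fin.castAdd M j)))
    have hB := θM.finite_fibers (Multiplicative.ofAdd
      (fun j => Multiplicative.toAdd y (Fin.natAdd N j)))
    refine Set.Finite.subset (((hA.prod hB).image
      (fun pr : G × H => (⟨pr.1, pr.2⟩ : G ⋊[α] H)))) ?_
    rintro x ⟨hxP, hxy⟩
    obtain ⟨hx1, hx2⟩ := (hmem x).1 hxP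
    have hadd : Fin.append (Multiplicative.toAdd (θN.toFun x.left))
        (Multiplicative.toAdd (θM.toFun x.right)) = Multiplicative.toAdd y := by
      rw [← hfx, hxy]
    refine ⟨(x.left, x.right), ⟨⟨hx1, ?_⟩, ⟨hx2, ?_⟩⟩, by cases x; rfl⟩
    · refine (ofAdd_toAdd _).symm.trans (congrArg _ (funext fun j => ?_))
      rw [← hadd, Fin.append_left]
    · refine (ofAdd_toAdd _).symm.trans (congrArg _ (funext fun j => ?_))
      rw [← hadd, Fin.append_right]
  -- lub preservation
  have hmaplub : ∀ p ∈ QSD.P, ∀ q ∈ QSD.P, ∀ r, QSD.IsLub p q r →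
      (ZQL (Fin (N + M))).IsLub (f p) (f q) (f r) := by
    intro p hp q hq r ⟨hrP, hpr, hqr, hrmin⟩
    obtain ⟨hp1, hp2⟩ := (hmem p).1 hp
    obtain ⟨hq1, hq2⟩ := (hmem q).1 hq
    obtain ⟨hr1, hr2⟩ := (hmem r).1 hrP
    obtain ⟨hpr1, hpr2⟩ := (sd_le_iff hα QSD hQSD hp2).1 hpr
    obtain ⟨hqr1, hqr2⟩ := (sd_le_iff hα QSD hQSD hq2).1 hqr
    have lubG : Q.IsLub p.left q.left r.left := by
      refine ⟨hr1, hpr1, hqr1, ?_⟩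
      intro s1 hs1 hps1 hqs1
      have hs : (⟨s1, r.right⟩ : G ⋊[α] H) ∈ QSD.P := (hmem _).2 ⟨hs1, hr2⟩
      have hps : QSD.le p ⟨s1, r.right⟩ :=
        (sd_le_iff hα QSD hQSD hp2).2 ⟨hps1, hpr2⟩
      have hqs : QSD.le q ⟨s1, r.right⟩ :=
        (sd_le_iff hα QSD hQSD hq2).2 ⟨hqs1, hqr2⟩
      exact ((sd_le_iff hα QSD hQSD hr2).1 (hrmin _ hs hps hqs)).1
    have lubH : QS.IsLub p.right q.right r.right := by
      refine ⟨hr2, hpr2, hqr2, ?_⟩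
      intro s2 hs2 hps2 hqs2
      have hs : (⟨r.left, s2⟩ : G ⋊[α] H) ∈ QSD.P := (hmem _).2 ⟨hr1, hs2⟩
      have hps : QSD.le p ⟨r.left, s2⟩ :=
        (sd_le_iff hα QSD hQSD hp2).2 ⟨hpr1, hps2⟩
      have hqs : QSD.le q ⟨r.left, s2⟩ :=
        (sd_le_iff hα QSD hQSD hq2).2 ⟨hqr1, hqs2⟩
      exact ((sd_le_iff hα QSD hQSD hr2).1 (hrmin _ hs hps hqs)).2
    have hN := (ZQL_isLub_iff (θN.mapsP _ hp1)).1
      (θN.map_lub p.left hp1 q.left hq1 r.left lubG)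
    have hM := (ZQL_isLub_iff (θM.mapsP _ hp2)).1
      (θM.map_lub p.right hp2 q.right hq2 r.right lubH)
    refine (ZQL_isLub_iff (hmapsP p hp)).2 fun i => ?_
    simp only [hfx]
    refine Fin.addCases (fun j => ?_) (fun j => ?_) i
    · simp only [Fin.append_left]; exact hN j
    · simp only [Fin.append_right]; exact hM j
  refine ⟨⟨f, hmapsP, hfin, hmaplub⟩, hfx, ?_⟩
  -- minimality property
  intro m hm p q hp hq hpq
  set mN : Multiplicative (Fin N → ℤ) :=
    Multiplicative.ofAdd (fun j => Multiplicative.toAdd m (Fin.castAdd M j)) with hmN_def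
  set mM : Multiplicative (Fin M → ℤ) :=
    Multiplicative.ofAdd (fun j => Multiplicative.toAdd m (Fin.natAdd N j)) with hmM_def
  have hmNP : mN ∈ (ZQL (Fin N)).P := fun j => hm _
  have hmMP : mM ∈ (ZQL (Fin M)).P := fun j => hm _
  have hle_m : ∀ x : G ⋊[α] H, (ZQL (Fin (N + M))).le m (f x) ↔
      (ZQL (Fin N)).le mN (θN.toFun x.left) ∧ (ZQL (Fin M)).le mM (θM.toFun x.right) := by
    intro x
    rw [ZQL_le_iff, ZQL_le_iff, ZQL_le_iff]
    constructor
    · intro h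
      refine ⟨fun j => ?_, fun j => ?_⟩
      · have := h (Fin.castAdd M j); rwa [hfx, Fin.append_left] at this
      · have := h (Fin.natAdd N j); rwa [hfx, Fin.append_right] at this
    · rintro ⟨h1, h2⟩ i
      rw [hfx]
      refine Fin.addCases (fun j => ?_) (fun j => ?_) i
      · rw [Fin.append_left]; exact h1 j
      · rw [Fin.append_right]; exact h2 j
  obtain ⟨hpP, hmp, hpmin⟩ := hp
  obtain ⟨hqP, hmq, hqmin⟩ := hq
  obtain ⟨hp1, hp2⟩ := (hmem p).1 hpP
  obtain ⟨hq1, hq2⟩ := (hmem q).1 hqP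
  obtain ⟨hmp1, hmp2⟩ := (hle_m p).1 hmp
  obtain ⟨hmq1, hmq2⟩ := (hle_m q).1 hmq
  have hminp1 : θN.Minimal mN p.left := by
    refine ⟨hp1, hmp1, fun r1 hr1 hmr1 hr1p => ?_⟩
    have := hpmin ⟨r1, p.right⟩ ((hmem _).2 ⟨hr1, hp2⟩)
      ((hle_m _).2 ⟨hmr1, hmp2⟩)
      ((sd_le_iff (x := ⟨r1, p.right⟩) (y := p) hα QSD hQSD hp2).2 ⟨hr1p, hreflQS _⟩)
    exact congrArg SemidirectProduct.left this
  have hminp2 : θM.Minimal mM p.right := by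
    refine ⟨hp2, hmp2, fun r2 hr2 hmr2 hr2p => ?_⟩
    have := hpmin ⟨p.left, r2⟩ ((hmem _).2 ⟨hp1, hr2⟩)
      ((hle_m _).2 ⟨hmp1, hmr2⟩)
      ((sd_le_iff (x := ⟨p.left, r2⟩) (y := p) hα QSD hQSD hr2).2 ⟨hreflQ _, hr2p⟩)
    exact congrArg SemidirectProduct.right this
  have hminq1 : θN.Minimal mN q.left := by
    refine ⟨hq1, hmq1, fun r1 hr1 hmr1 hr1q => ?_⟩
    have := hqmin ⟨r1, q.right⟩ ((hmem _).2 ⟨hr1, hq2⟩)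
      ((hle_m _).2 ⟨hmr1, hmq2⟩)
      ((sd_le_iff (x := ⟨r1, q.right⟩) (y := q) hα QSD hQSD hq2).2 ⟨hr1q, hreflQS _⟩)
    exact congrArg SemidirectProduct.left this
  have hminq2 : θM.Minimal mM q.right := by
    refine ⟨hq2, hmq2, fun r2 hr2 hmr2 hr2q => ?_⟩
    have := hqmin ⟨q.left, r2⟩ ((hmem _).2 ⟨hq1, hr2⟩)
      ((hle_m _).2 ⟨hmq1, hmr2⟩)
      ((sd_le_iff (x := ⟨q.left, r2⟩) (y := q) hα QSD hQSD hr2).2 ⟨hreflQ _, hr2q⟩)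
    exact congrArg SemidirectProduct.right this
  rintro ⟨r, hrP, hpr, hqr⟩
  obtain ⟨hr1, hr2⟩ := (hmem r).1 hrP
  obtain ⟨hpr1, hpr2⟩ := (sd_le_iff hα QSD hQSD hp2).1 hpr
  obtain ⟨hqr1, hqr2⟩ := (sd_le_iff hα QSD hQSD hq2).1 hqr
  by_cases h1 : p.left = q.left
  · have h2 : p.right ≠ q.right := fun h2 => hpq (SemidirectProduct.ext h1 h2)
    exact hminM mM hmMP p.right q.right hminp2 hminq2 h2 ⟨r.right, hr2, hpr2, hqr2⟩
  · exact hminN mN hmNP p.left q.left hminp1 hminq1 h1 ⟨r.left, hr1, hpr1, hqr1⟩
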